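/- arXiv:2104.09685 — 9 statements merged into one kernel-verified Lean document; each statement's English description precedes it below -/
import Mathlib

section
/- Let p > 1 and let a, b ∈ ℝ^k be vectors (k ≥ 1). Then min_{1 ≤ i ≤ k} |a_i b_i| ≤ k^{-p} · ‖a‖₁ · ‖b‖_{1/(p-1)}, where ‖b‖_{1/(p-1)} = (Σ_{i=1}^k |b_i|^{1/(p-1)})^{p-1}. -/
theorem stmt_0 (k : ℕ) (hk : 1 ≤ k) (p : ℝ) (hp : 1 < p) (a b : Fin k → ℝ) :
    (Finset.univ.inf' (Finset.univ_nonempty_iff.mpr ⟨⟨0, hk⟩⟩)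
        fun i => |a i * b i|) ≤
      (k : ℝ) ^ (-p) * (∑ i, |a i|) *
        (∑ i, |b i| ^ (1 / (p - 1))) ^ (p - 1) := by
  have hp0 : (0:ℝ) < p := lt_trans one_pos hp
  have hp1 : (0:ℝ) < p - 1 := by linarith
  have hk0 : (0:ℝ) < (k:ℝ) := by exact_mod_cast Nat.lt_of_lt_of_le Nat.zero_lt_one hk
  set m : ℝ := Finset.univ.inf' (Finset.univ_nonempty_iff.mpr ⟨⟨0, hk⟩⟩)
      fun i => |a i * b i| with hm
  have hm0 : 0 ≤ m := Finset.le_inf' _ _ fun i _ => abs_nonneg _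
  have hmle : ∀ i : Fin k, m ≤ |a i * b i| := fun i =>
    Finset.inf'_le _ (Finset.mem_univ i)
  set q : ℝ := p / (p - 1) with hq
  have hpq : p.HolderConjugate q := (Real.holderConjugate_iff_eq_conjExponent hp).mpr hq
  have hqp : (1:ℝ)/p * q = 1 / (p - 1) := by rw [hq]; field_simp
  have hpq' : (1:ℝ)/q * p = p - 1 := by rw [hq]; field_simp
  set A : ℝ := ∑ i, |a i| with hA
  set B : ℝ := ∑ i, |b i| ^ (1 / (p - 1)) with hB
  have hA0 : 0 ≤ A := Finset.sum_nonneg fun i _ => abs_nonneg _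
  have hB0 : 0 ≤ B := Finset.sum_nonneg fun i _ => Real.rpow_nonneg (abs_nonneg _) _
  have holder := Real.inner_le_Lp_mul_Lq_of_nonneg (Finset.univ)
      (f := fun i : Fin k => |a i| ^ (1/p)) (g := fun i : Fin k => |b i| ^ (1/p)) hpq
      (fun i _ => Real.rpow_nonneg (abs_nonneg _) _)
      (fun i _ => Real.rpow_nonneg (abs_nonneg _) _)
  have hfa : ∀ i : Fin k, (|a i| ^ (1/p)) ^ p = |a i| := fun i => by
    rw [← Real.rpow_mul (abs_nonneg _), one_div_mul_cancel hp0.ne', Real.rpow_one]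
  have hgb : ∀ i : Fin k, (|b i| ^ (1/p)) ^ q = |b i| ^ (1/(p-1)) := fun i => by
    rw [← Real.rpow_mul (abs_nonneg _), hqp]
  simp only [hfa, hgb] at holder
  have hlow : (k:ℝ) * m ^ (1/p) ≤ ∑ i, |a i| ^ (1/p) * |b i| ^ (1/p) := by
    have : ∀ i : Fin k, m ^ (1/p) ≤ |a i| ^ (1/p) * |b i| ^ (1/p) := fun i => by
      rw [← Real.mul_rpow (abs_nonneg _) (abs_nonneg _), ← abs_mul]
      exact Real.rpow_le_rpow hm0 (hmle i) (by positivity)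
    calc (k:ℝ) * m ^ (1/p) = ∑ _i : Fin k, m ^ (1/p) := by
          rw [Finset.sum_const, Finset.card_univ, Fintype.card_fin, nsmul_eq_mul]
      _ ≤ _ := Finset.sum_le_sum fun i _ => this i
  have key : (k:ℝ) * m ^ (1/p) ≤ A ^ (1/p) * B ^ (1/q) := hlow.trans holder
  have keyp : ((k:ℝ) * m ^ (1/p)) ^ p ≤ (A ^ (1/p) * B ^ (1/q)) ^ p :=
    Real.rpow_le_rpow (by positivity) key hp0.le
  have hL : ((k:ℝ) * m ^ (1/p)) ^ p = (k:ℝ) ^ p * m := by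
    rw [Real.mul_rpow hk0.le (Real.rpow_nonneg hm0 _), ← Real.rpow_mul hm0,
      one_div_mul_cancel hp0.ne', Real.rpow_one]
  have hR : (A ^ (1/p) * B ^ (1/q)) ^ p = A * B ^ (p - 1) := by
    rw [Real.mul_rpow (Real.rpow_nonneg hA0 _) (Real.rpow_nonneg hB0 _),
      ← Real.rpow_mul hA0, one_div_mul_cancel hp0.ne', Real.rpow_one,
      ← Real.rpow_mul hB0, hpq']
  rw [hL, hR] at keyp
  have hkp : (0:ℝ) < (k:ℝ) ^ p := Real.rpow_pos_of_pos hk0 _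
  rw [Real.rpow_neg hk0.le]
  calc m = ((k:ℝ) ^ p)⁻¹ * ((k:ℝ) ^ p * m) := by field_simp
    _ ≤ ((k:ℝ) ^ p)⁻¹ * (A * B ^ (p - 1)) :=
        mul_le_mul_of_nonneg_left keyp (inv_nonneg.mpr hkp.le)
    _ = ((k:ℝ) ^ p)⁻¹ * A * B ^ (p - 1) := by ring
end

section
/- Define a sequence (A_k) by A_0 = 0 and A_k = A_{k-1} + a_{k-1} where a_{k-1} = (1 + √(1 + 4A_{k-1}))/2. Then for every k ≥ 1: (i) a_{k-1}² = A_k, and (ii) k²/4 ≤ A_k ≤ k². -/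
theorem stmt_2 (A a : ℕ → ℝ) (hA0 : A 0 = 0)
    (ha : ∀ k : ℕ, a k = (1 + Real.sqrt (1 + 4 * A k)) / 2)
    (hrec : ∀ k : ℕ, A (k + 1) = A k + a k) :
    ∀ k : ℕ, 1 ≤ k →
      (a (k - 1)) ^ 2 = A k ∧ (k : ℝ) ^ 2 / 4 ≤ A k ∧ A k ≤ (k : ℝ) ^ 2 := by
  have key : ∀ k : ℕ, (k : ℝ) ^ 2 / 4 ≤ A k ∧ A k ≤ (k : ℝ) ^ 2 := by
    intro k
    induction k with
    | zero => simp [hA0]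
    | succ n ih =>
      obtain ⟨h1, h2⟩ := ih
      have hAnn : 0 ≤ A n := le_trans (by positivity) h1
      have hlo : (n : ℝ) ≤ Real.sqrt (1 + 4 * A n) := by
        have h : (n : ℝ) ^ 2 ≤ 1 + 4 * A n := by nlinarith
        calc (n : ℝ) = Real.sqrt ((n : ℝ) ^ 2) := by
              rw [Real.sqrt_sq (by positivity)]
          _ ≤ _ := Real.sqrt_le_sqrt h
      have hhi : Real.sqrt (1 + 4 * A n) ≤ 2 * (n : ℝ) + 1 := by
        have h : 1 + 4 * A n ≤ (2 * (n : ℝ) + 1) ^ 2 := by nlinarith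
        calc Real.sqrt (1 + 4 * A n) ≤ Real.sqrt ((2 * (n : ℝ) + 1) ^ 2) :=
              Real.sqrt_le_sqrt h
          _ = 2 * (n : ℝ) + 1 := Real.sqrt_sq (by positivity)
      have hrecn := hrec n
      rw [ha n] at hrecn
      constructor <;> push_cast <;> nlinarith
  intro k hk
  obtain ⟨m, rfl⟩ : ∃ m, k = m + 1 := ⟨k - 1, (Nat.succ_pred_eq_of_pos hk).symm⟩
  have hAm : 0 ≤ A m := le_trans (by positivity) (key m).1
  have hs : Real.sqrt (1 + 4 * A m) ^ 2 = 1 + 4 * A m :=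
    Real.sq_sqrt (by linarith)
  have hrecm := hrec m
  rw [ha m] at hrecm
  refine ⟨?_, (key (m + 1)).1, (key (m + 1)).2⟩
  simp only [Nat.add_sub_cancel]
  rw [ha m]
  nlinarith
end

section
/- Let (λ_k)_{k≥1} be a sequence of positive reals and define A_0 = 0, τ_k = λ_k(1 + μA_{k-1}) for μ ≥ 0, a_{k-1} = (τ_{k-1} + √(τ_{k-1}² + 4τ_{k-1}A_{k-1}))/2, and A_k = A_{k-1} + a_{k-1}. Then for every k ≥ 1, A_k ≥ (1/4)(Σ_{i=1}^{k} √λ_{i-1})², where λ_0 := λ_1. -/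
theorem stmt_3 (lam : ℕ → ℝ) (hlam : ∀ k : ℕ, 1 ≤ k → 0 < lam k)
    (hlam0 : lam 0 = lam 1) (μ : ℝ) (hμ : 0 ≤ μ)
    (A τ a : ℕ → ℝ) (hA0 : A 0 = 0)
    (hτ : ∀ k : ℕ, τ k = lam (k + 1) * (1 + μ * A k))
    (ha : ∀ k : ℕ, a k = (τ k + Real.sqrt ((τ k) ^ 2 + 4 * τ k * A k)) / 2)
    (hA : ∀ k : ℕ, A (k + 1) = A k + a k) :
    ∀ k : ℕ, 1 ≤ k →
      (1 / 4) * (∑ i ∈ Finset.range k, Real.sqrt (lam i)) ^ 2 ≤ A k := by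
  have hAnn : ∀ k, 0 ≤ A k := by
    intro k
    induction k with
    | zero => rw [hA0]
    | succ n ih =>
      have hτn : 0 ≤ τ n := by
        rw [hτ]
        have := hlam (n+1) (by omega)
        nlinarith [mul_nonneg hμ ih]
      have han : 0 ≤ a n := by
        rw [ha]
        have := Real.sqrt_nonneg ((τ n)^2 + 4 * τ n * A n)
        linarith
      rw [hA]; linarith
  have hA1 : A 1 = lam 1 := by
    have hτ0 : τ 0 = lam 1 := by rw [hτ, hA0]; ring
    have : ((lam 1)^2 : ℝ) + 4 * lam 1 * 0 = (lam 1)^2 := by ring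
    rw [hA, ha, hA0, hτ0, this, Real.sqrt_sq (hlam 1 le_rfl).le]
    ring
  have key : ∀ k, 1 ≤ k →
      (1/2) * ∑ i ∈ Finset.range (k+1), Real.sqrt (lam i) ≤ Real.sqrt (A k) := by
    intro k hk
    induction k with
    | zero => omega
    | succ n ih =>
      rcases Nat.eq_or_lt_of_le hk with h1 | h1
      · -- n = 0 case
        have hn0 : n = 0 := by omega
        subst hn0
        rw [hA1, Finset.sum_range_succ, Finset.sum_range_succ, Finset.sum_range_zero,
          hlam0]
        linarith [Real.sqrt_nonneg (lam 1)]
      · have hn1 : 1 ≤ n := by omega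
        have ih' := ih hn1
        have hτn : lam (n+1) ≤ τ n := by
          rw [hτ]
          have h1 := hlam (n+1) (by omega)
          have h2 := hAnn n
          nlinarith [mul_nonneg hμ h2]
        have hτpos : 0 < τ n := lt_of_lt_of_le (hlam (n+1) (by omega)) hτn
        have hstep : Real.sqrt (A n) + Real.sqrt (τ n) / 2 ≤ Real.sqrt (A (n+1)) := by
          have h1 : Real.sqrt (4 * τ n * A n) ≤ Real.sqrt ((τ n)^2 + 4 * τ n * A n) :=
            Real.sqrt_le_sqrt (by nlinarith)
          have h2 : Real.sqrt (4 * τ n * A n) = 2 * (Real.sqrt (τ n) * Real.sqrt (A n)) := by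
            rw [show (4:ℝ) * τ n * A n = (2:ℝ)^2 * (τ n * A n) by ring,
                Real.sqrt_mul (by positivity), Real.sqrt_sq (by norm_num),
                Real.sqrt_mul hτpos.le]
          have hAsq := Real.sq_sqrt (hAnn n)
          have hτsq := Real.sq_sqrt hτpos.le
          have hA2 : (Real.sqrt (A n) + Real.sqrt (τ n) / 2)^2 ≤ A (n+1) := by
            rw [hA, ha]
            nlinarith [Real.sqrt_nonneg (A n), Real.sqrt_nonneg (τ n)]
          calc Real.sqrt (A n) + Real.sqrt (τ n) / 2
              = Real.sqrt ((Real.sqrt (A n) + Real.sqrt (τ n) / 2)^2) :=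
                (Real.sqrt_sq (by positivity)).symm
            _ ≤ Real.sqrt (A (n+1)) := Real.sqrt_le_sqrt hA2
        have hlamτ : Real.sqrt (lam (n+1)) ≤ Real.sqrt (τ n) := Real.sqrt_le_sqrt hτn
        rw [Finset.sum_range_succ]
        linarith
  intro k hk
  have h1 := key k hk
  have hs : ∀ m : ℕ, 0 ≤ ∑ i ∈ Finset.range m, Real.sqrt (lam i) :=
    fun m => Finset.sum_nonneg fun i _ => Real.sqrt_nonneg _
  have h2 : ∑ i ∈ Finset.range k, Real.sqrt (lam i)
      ≤ ∑ i ∈ Finset.range (k+1), Real.sqrt (lam i) := by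
    rw [Finset.sum_range_succ]
    have := Real.sqrt_nonneg (lam k)
    linarith
  have h3 := Real.sq_sqrt (hAnn k)
  nlinarith [hs k, hs (k+1), Real.sqrt_nonneg (A k)]
end

section
/- Let ψ : Z → (-∞, ∞] be a proper lower semicontinuous convex function on a finite-dimensional real inner product space, (λ_k)_{k≥1} positive reals, and define z_k = argmin_u {λ_k ψ(u) + (1/2)‖u − z_{k-1}‖²} and v_k = (z_{k-1} − z_k)/λ_k for k ≥ 1, starting from z_0 with ψ(z_0) < ∞. Then for every k ≥ 1, min_{1 ≤ i ≤ k} ‖v_i‖² ≤ (ψ(z_0) − ψ(z_k)) / (Σ_{i=1}^k λ_i). -/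
open scoped RealInnerProductSpace

/-- Global convergence rate of the exact proximal point method: for every `k ≥ 1`,
`min_{1 ≤ i ≤ k} ‖v_i‖² ≤ (ψ(z₀) − ψ(z_k)) / (∑_{i=1}^k λ_i)`, stated in the
equivalent product form valid for extended-real-valued `ψ`. -/
theorem stmt_5 {Z : Type*} [NormedAddCommGroup Z] [InnerProductSpace ℝ Z]
    [FiniteDimensional ℝ Z]
    (ψ : Z → EReal) (hbot : ∀ x, ψ x ≠ ⊥) (hfin : ∃ x, ψ x ≠ ⊤)
    (hlsc : LowerSemicontinuous ψ)
    (hconv : ∀ x y : Z, ∀ t : ℝ, 0 ≤ t → t ≤ 1 →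
      ψ (t • x + (1 - t) • y) ≤ (t : EReal) * ψ x + ((1 - t : ℝ) : EReal) * ψ y)
    (lam : ℕ → ℝ) (hlam : ∀ k : ℕ, 1 ≤ k → 0 < lam k)
    (zseq v : ℕ → Z) (h0 : ψ (zseq 0) ≠ ⊤)
    (hmin : ∀ k : ℕ, ∀ u,
      (lam (k + 1) : EReal) * ψ (zseq (k + 1)) +
          ((1 / 2 * ‖zseq (k + 1) - zseq k‖ ^ 2 : ℝ) : EReal) ≤
        (lam (k + 1) : EReal) * ψ u + ((1 / 2 * ‖u - zseq k‖ ^ 2 : ℝ) : EReal))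
    (hv : ∀ k : ℕ, v (k + 1) = (lam (k + 1))⁻¹ • (zseq k - zseq (k + 1))) :
    ∀ k : ℕ, ∀ hk : 1 ≤ k,
      ((((Finset.Icc 1 k).inf' (Finset.nonempty_Icc.mpr hk) fun i => ‖v i‖ ^ 2) *
          ∑ i ∈ Finset.Icc 1 k, lam i : ℝ) : EReal) + ψ (zseq k) ≤ ψ (zseq 0) := by
  -- finiteness of ψ along the sequence
  have hfinite : ∀ k, ψ (zseq k) ≠ ⊤ := by
    intro k
    induction k with
    | zero => exact h0
    | succ n ih =>
      intro htop
      have h := hmin n (zseq n)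
      rw [htop, EReal.coe_mul_top_of_pos (hlam (n+1) (Nat.le_add_left 1 n)),
        EReal.top_add_of_ne_bot (EReal.coe_ne_bot _),
        ← EReal.coe_toReal ih (hbot _), ← EReal.coe_mul, ← EReal.coe_add] at h
      exact (EReal.coe_ne_top _) (top_le_iff.mp h)
  set F : ℕ → ℝ := fun k => (ψ (zseq k)).toReal with hF
  have hpsiF : ∀ k, ψ (zseq k) = ((F k : ℝ) : EReal) := fun k =>
    (EReal.coe_toReal (hfinite k) (hbot _)).symm
  -- per-step descent inequality
  have hstep : ∀ n : ℕ, F (n+1) + lam (n+1) * ‖v (n+1)‖^2 ≤ F n := by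
    intro n
    have hlpos : 0 < lam (n+1) := hlam _ (Nat.le_add_left 1 n)
    set d : ℝ := ‖zseq (n+1) - zseq n‖ with hd
    have key' : ∀ ε : ℝ, 0 < ε → d^2 ≤ lam (n+1) * (F n - F (n+1)) + ε := by
      intro ε hε
      have hd2 : (0:ℝ) < d^2 + 1 := by positivity
      set t : ℝ := min 1 (2*ε/(d^2+1)) with ht
      have ht0 : 0 < t := lt_min one_pos (by positivity)
      have ht1 : t ≤ 1 := min_le_left _ _
      set u : Z := t • zseq n + (1 - t) • zseq (n+1) with hu
      have hc := hconv (zseq n) (zseq (n+1)) t ht0.le ht1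
      rw [hpsiF n, hpsiF (n+1)] at hc
      have hub : ψ u ≤ ((t * F n + (1-t) * F (n+1) : ℝ) : EReal) := by
        refine hc.trans_eq ?_
        norm_cast
      have hunetop : ψ u ≠ ⊤ := fun h => by
        rw [h] at hub
        exact (EReal.coe_ne_top _) (top_le_iff.mp hub)
      set g : ℝ := (ψ u).toReal with hg
      have hgu : ψ u = ((g : ℝ) : EReal) := (EReal.coe_toReal hunetop (hbot u)).symm
      have hgle : g ≤ t * F n + (1-t) * F (n+1) := by
        rw [hgu] at hub
        exact_mod_cast hub
      have hm := hmin n u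
      rw [hpsiF (n+1), hgu, ← EReal.coe_mul, ← EReal.coe_mul, ← EReal.coe_add,
        ← EReal.coe_add, EReal.coe_le_coe_iff] at hm
      -- compute the norm at u
      have hux : u - zseq n = (1 - t) • (zseq (n+1) - zseq n) := by
        rw [hu]; module
      have hnorm : ‖u - zseq n‖ = (1 - t) * d := by
        rw [hux, norm_smul, Real.norm_eq_abs, abs_of_nonneg (by linarith)]
      rw [hnorm] at hm
      -- divide by t
      have htd : 1/2 * d^2 * t ≤ ε := by
        have htr : t ≤ 2*ε/(d^2+1) := min_le_right _ _
        have h1 : d^2/(d^2+1) ≤ 1 := by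
          rw [div_le_one hd2]; linarith
        have h2 : 1/2 * d^2 * t ≤ 1/2 * d^2 * (2*ε/(d^2+1)) := by
          apply mul_le_mul_of_nonneg_left htr (by positivity)
        have h3 : 1/2 * d^2 * (2*ε/(d^2+1)) = ε * (d^2/(d^2+1)) := by ring
        nlinarith
      have hmul : lam (n+1) * g ≤ lam (n+1) * (t * F n + (1-t) * F (n+1)) :=
        mul_le_mul_of_nonneg_left hgle hlpos.le
      have hcomb : t * (d^2 - 1/2 * d^2 * t) ≤ t * (lam (n+1) * (F n - F (n+1))) := by
        nlinarith [hm, hmul]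
      have hdiv : d^2 - 1/2 * d^2 * t ≤ lam (n+1) * (F n - F (n+1)) :=
        le_of_mul_le_mul_left (by linarith [hcomb]) ht0
      linarith
    have key : d^2 ≤ lam (n+1) * (F n - F (n+1)) := by
      by_contra h
      push_neg at h
      have := key' ((d^2 - lam (n+1) * (F n - F (n+1)))/2) (by linarith)
      linarith
    have hvnorm : ‖v (n+1)‖ = (lam (n+1))⁻¹ * d := by
      rw [hv n, norm_smul, Real.norm_eq_abs, abs_of_pos (inv_pos.mpr hlpos), hd,
        norm_sub_rev]
    rw [hvnorm]
    have hlamne : lam (n+1) ≠ 0 := hlpos.ne'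
    have : lam (n+1) * ((lam (n+1))⁻¹ * d)^2 = d^2 / lam (n+1) := by
      field_simp
    rw [this]
    have h4 : d^2 / lam (n+1) ≤ F n - F (n+1) := (div_le_iff₀ hlpos).mpr (by linarith)
    linarith
  -- summation
  have hsum : ∀ k : ℕ, F k + ∑ i ∈ Finset.Icc 1 k, lam i * ‖v i‖^2 ≤ F 0 := by
    intro k
    induction k with
    | zero => simp
    | succ n ih =>
      rw [Finset.sum_Icc_succ_top (Nat.le_add_left 1 n)]
      have := hstep n
      linarith
  intro k hk
  have hne := Finset.nonempty_Icc.mpr hk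
  set m : ℝ := (Finset.Icc 1 k).inf' hne fun i => ‖v i‖ ^ 2 with hm
  have hmle : m * ∑ i ∈ Finset.Icc 1 k, lam i ≤ ∑ i ∈ Finset.Icc 1 k, lam i * ‖v i‖^2 := by
    rw [Finset.mul_sum]
    refine Finset.sum_le_sum fun i hi => ?_
    have hi1 : 1 ≤ i := (Finset.mem_Icc.mp hi).1
    have := Finset.inf'_le (fun i => ‖v i‖ ^ 2) hi
    rw [mul_comm]
    exact mul_le_mul_of_nonneg_left this (hlam i hi1).le
  rw [hpsiF k, hpsiF 0, ← EReal.coe_add, EReal.coe_le_coe_iff]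
  have := hsum k
  linarith
end

section
/- Let φ : Z → (-∞, ∞] be proper, let λ > 0, σ ∈ (0,1), z⁻ ∈ Z, and suppose (z, ṽ, ε̃) ∈ Z × Z × ℝ₊ satisfies ṽ ∈ ∂_{ε̃}(λφ + (1/2)‖·−z⁻‖²)(z) and ‖ṽ‖² + 2ε̃ ≤ σ‖z⁻ − z + ṽ‖². Then (1/λ)‖z⁻ − z + ṽ‖² ≤ 2(φ(z⁻) − φ(z))/(1 − σ). -/
open scoped RealInnerProductSpace

/-- Descent property of the general inexact proximal point framework. -/
theorem stmt_6 {Z : Type*} [NormedAddCommGroup Z] [InnerProductSpace ℝ Z]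
    (φ : Z → EReal) (hbot : ∀ x, φ x ≠ ⊥) (hfin : ∃ x, φ x ≠ ⊤)
    (lam σ : ℝ) (hlam : 0 < lam) (hσ0 : 0 < σ) (hσ1 : σ < 1)
    (zm z vt : Z) (εt : ℝ) (hεt : 0 ≤ εt)
    (hincl : ∀ u, (lam : EReal) * φ z +
        ((1 / 2 * ‖z - zm‖ ^ 2 + ⟪vt, u - z⟫ - εt : ℝ) : EReal) ≤
      (lam : EReal) * φ u + ((1 / 2 * ‖u - zm‖ ^ 2 : ℝ) : EReal))
    (hrel : ‖vt‖ ^ 2 + 2 * εt ≤ σ * ‖zm - z + vt‖ ^ 2) :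
    (((1 - σ) / (2 * lam) * ‖zm - z + vt‖ ^ 2 : ℝ) : EReal) + φ z ≤ φ zm := by
  have hkey := hincl zm
  rw [sub_self, norm_zero] at hkey
  by_cases hzm : φ zm = ⊤
  · rw [hzm]; exact le_top
  · lift φ zm to ℝ using ⟨hzm, hbot zm⟩ with b hb
    by_cases hz : φ z = ⊤
    · exfalso
      rw [hz] at hkey
      have h1 : (lam : EReal) * ⊤ = ⊤ := EReal.coe_mul_top_of_pos hlam
      rw [h1, EReal.top_add_of_ne_bot (by exact_mod_cast EReal.coe_ne_bot _)] at hkey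
      exact (EReal.add_lt_top (by exact_mod_cast EReal.coe_ne_top _)
        (EReal.coe_ne_top _)).not_ge hkey
    · lift φ z to ℝ using ⟨hz, hbot z⟩ with a ha
      have hkey' : lam * a + (1 / 2 * ‖z - zm‖ ^ 2 + ⟪vt, zm - z⟫ - εt)
          ≤ lam * b + 1 / 2 * 0 ^ 2 := by
        exact_mod_cast hkey
      have hexp : ‖zm - z + vt‖ ^ 2 = ‖zm - z‖ ^ 2 + 2 * ⟪zm - z, vt⟫ + ‖vt‖ ^ 2 :=
        norm_add_sq_real _ _
      have hcomm : ⟪zm - z, vt⟫ = ⟪vt, zm - z⟫ := real_inner_comm _ _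
      have hns : ‖z - zm‖ = ‖zm - z‖ := norm_sub_rev _ _
      rw [hns] at hkey'
      have hgoal : (1 - σ) / (2 * lam) * ‖zm - z + vt‖ ^ 2 + a ≤ b := by
        rw [div_mul_eq_mul_div, div_add' _ _ _ (by positivity), div_le_iff₀ (by positivity)]
        nlinarith [hkey', hrel, hexp, hcomm]
      exact_mod_cast hgoal
end

section
/- Let φ : Z → (-∞, ∞] be proper, let λ > 0, σ ∈ (0,1), z⁻ ∈ Z, and suppose (z, ṽ, ε̃) satisfies ṽ ∈ ∂_{ε̃}(λφ + (1/2)‖·−z⁻‖²)(z) and ‖ṽ‖² + 2ε̃ ≤ σ‖z⁻ − z + ṽ‖². Then for every u ∈ Z, φ(z) ≤ φ(u) + ‖z⁻ − u‖²/(2(1−σ)λ). -/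
open scoped RealInnerProductSpace

lemma real_side {Z : Type*} [NormedAddCommGroup Z] [InnerProductSpace ℝ Z]
    (lam σ a b : ℝ) (hlam : 0 < lam) (hσ0 : 0 < σ) (hσ1 : σ < 1)
    (zm z u vt : Z) (εt : ℝ) (hεt : 0 ≤ εt)
    (hR : lam * a + (1 / 2 * ‖z - zm‖ ^ 2 + ⟪vt, u - z⟫ - εt) ≤
      lam * b + 1 / 2 * ‖u - zm‖ ^ 2)
    (hrel : ‖vt‖ ^ 2 + 2 * εt ≤ σ * ‖zm - z + vt‖ ^ 2) :
    a ≤ b + ‖zm - u‖ ^ 2 / (2 * (1 - σ) * lam) := by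
  set p := u - zm with hp
  set q := zm - z with hq
  have hzq : z - zm = -q := by simp [hq]
  have huz : u - z = p + q := by abel_nf; simp [hp, hq]; abel
  have h1 : ‖z - zm‖ ^ 2 = ‖q‖ ^ 2 := by rw [hzq, norm_neg]
  have h2 : ⟪vt, u - z⟫ = ⟪vt, p⟫ + ⟪vt, q⟫ := by rw [huz, inner_add_right]
  have h3 : ‖zm - u‖ ^ 2 = ‖p‖ ^ 2 := by rw [show zm - u = -p by simp [hp], norm_neg]
  have h4 : ‖q + vt‖ ^ 2 = ‖q‖ ^ 2 + 2 * ⟪vt, q⟫ + ‖vt‖ ^ 2 := by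
    rw [norm_add_sq_real]; ring_nf
    rw [real_inner_comm]; ring
  have h5 : -⟪vt, p⟫ ≤ ‖vt‖ * ‖p‖ := by
    have := abs_real_inner_le_norm vt p
    cases abs_cases (⟪vt, p⟫) with
    | inl h => linarith
    | inr h => linarith
  have hnp : (0:ℝ) ≤ ‖p‖ := norm_nonneg _
  have hnv : (0:ℝ) ≤ ‖vt‖ := norm_nonneg _
  have hβ : (0:ℝ) < 1 - σ := by linarith
  -- ‖vt‖*‖p‖ ≤ (1-σ)/(2σ)*‖vt‖^2 + σ/(2(1-σ))*‖p‖^2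
  have h6 : ‖vt‖ * ‖p‖ ≤ (1-σ)/(2*σ)*‖vt‖^2 + σ/(2*(1-σ))*‖p‖^2 := by
    have key : 2*σ*(1-σ)*(‖vt‖*‖p‖) ≤ (1-σ)^2*‖vt‖^2 + σ^2*‖p‖^2 := by
      nlinarith [sq_nonneg ((1-σ)*‖vt‖ - σ*‖p‖)]
    have e : (1-σ)/(2*σ)*‖vt‖^2 + σ/(2*(1-σ))*‖p‖^2
        = ((1-σ)^2*‖vt‖^2 + σ^2*‖p‖^2) / (2*σ*(1-σ)) := by
      field_simp
    rw [e, le_div_iff₀ (by positivity)]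
    linarith
  -- hrel in q terms
  have hrel' : ‖vt‖ ^ 2 + 2 * εt ≤ σ * ‖q + vt‖ ^ 2 := by rwa [hq] at hrel ⊢
  -- combine
  rw [h1, h2] at hR
  have e2 : 1/2*‖p‖^2 + σ/(2*(1-σ))*‖p‖^2 = ‖p‖^2/(2*(1-σ)) := by
    field_simp; ring
  have key : lam * a - lam * b ≤ ‖p‖ ^ 2 / (2*(1-σ)) := by
    have hv2 : ‖vt‖^2 ≤ σ * ‖q+vt‖^2 := by linarith
    have e1 : (1-σ)/(2*σ)*‖vt‖^2 ≤ (1-σ)/2 * ‖q+vt‖^2 := by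
      rw [div_mul_eq_mul_div, div_le_iff₀ (by positivity)]
      have : (1-σ) * ‖vt‖^2 ≤ (1-σ) * (σ * ‖q+vt‖^2) := by
        exact mul_le_mul_of_nonneg_left hv2 (le_of_lt hβ)
      calc (1-σ)*‖vt‖^2 ≤ (1-σ)*(σ*‖q+vt‖^2) := this
        _ = (1-σ)/2*‖q+vt‖^2 * (2*σ) := by ring
    linarith [h6, hR, h4, h5, hrel', e1, e2]
  have : a - b ≤ ‖p‖^2 / (2*(1-σ)) / lam := by
    rw [le_div_iff₀ hlam]
    nlinarith [key]
  have heq : ‖zm - u‖ ^ 2 / (2 * (1 - σ) * lam) = ‖p‖^2 / (2*(1-σ)) / lam := by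
    rw [h3, div_div]
  linarith [this, heq.ge]

/-- Approximate-optimality property of an inexact proximal point step. -/
theorem stmt_7 {Z : Type*} [NormedAddCommGroup Z] [InnerProductSpace ℝ Z]
    (φ : Z → EReal) (hbot : ∀ x, φ x ≠ ⊥) (hfin : ∃ x, φ x ≠ ⊤)
    (lam σ : ℝ) (hlam : 0 < lam) (hσ0 : 0 < σ) (hσ1 : σ < 1)
    (zm z vt : Z) (εt : ℝ) (hεt : 0 ≤ εt)
    (hincl : ∀ u, (lam : EReal) * φ z +
        ((1 / 2 * ‖z - zm‖ ^ 2 + ⟪vt, u - z⟫ - εt : ℝ) : EReal) ≤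
      (lam : EReal) * φ u + ((1 / 2 * ‖u - zm‖ ^ 2 : ℝ) : EReal))
    (hrel : ‖vt‖ ^ 2 + 2 * εt ≤ σ * ‖zm - z + vt‖ ^ 2) :
    ∀ u, φ z ≤ φ u + ((‖zm - u‖ ^ 2 / (2 * (1 - σ) * lam) : ℝ) : EReal) := by
  have hlamE : ((lam : ℝ) : EReal) ≠ ⊥ ∧ ((lam : ℝ) : EReal) ≠ ⊤ := by
    exact ⟨EReal.coe_ne_bot _, EReal.coe_ne_top _⟩
  have hztop : φ z ≠ ⊤ := by
    intro hz
    obtain ⟨w, hw⟩ := hfin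
    obtain ⟨b, hb⟩ : ∃ b : ℝ, φ w = (b : EReal) :=
      ⟨(φ w).toReal, (EReal.coe_toReal hw (hbot w)).symm⟩
    have h := hincl w
    rw [hz, hb] at h
    have hl : (lam : EReal) * ⊤ = ⊤ := by
      rw [EReal.mul_top_of_pos]; exact_mod_cast hlam
    rw [hl, EReal.top_add_of_ne_bot (EReal.coe_ne_bot _)] at h
    have : ((lam * b + 1 / 2 * ‖w - zm‖ ^ 2 : ℝ) : EReal) = ⊤ := by
      refine top_le_iff.mp ?_
      calc (⊤ : EReal) ≤ _ := h
        _ = _ := by rw [← EReal.coe_mul, ← EReal.coe_add]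
    exact (EReal.coe_ne_top _) this
  obtain ⟨a, ha⟩ : ∃ a : ℝ, φ z = (a : EReal) :=
    ⟨(φ z).toReal, (EReal.coe_toReal hztop (hbot z)).symm⟩
  intro u
  by_cases hu : φ u = ⊤
  · rw [hu, EReal.top_add_of_ne_bot (EReal.coe_ne_bot _)]
    exact le_top
  obtain ⟨b, hb⟩ : ∃ b : ℝ, φ u = (b : EReal) :=
    ⟨(φ u).toReal, (EReal.coe_toReal hu (hbot u)).symm⟩
  have h := hincl u
  rw [ha, hb, ← EReal.coe_mul, ← EReal.coe_mul, ← EReal.coe_add, ← EReal.coe_add] at h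
  have hR : lam * a + (1 / 2 * ‖z - zm‖ ^ 2 + ⟪vt, u - z⟫ - εt) ≤
      lam * b + 1 / 2 * ‖u - zm‖ ^ 2 := by exact_mod_cast h
  have := real_side lam σ a b hlam hσ0 hσ1 zm z u vt εt hεt hR hrel
  rw [ha, hb, ← EReal.coe_add]
  exact_mod_cast this
end

section
/- Let C be a nonempty closed convex subset of a finite-dimensional real inner product space. Then inf_{‖d‖ ≤ 1} σ_C(d) = −min_{u ∈ C} ‖u‖, where σ_C(d) := sup_{u ∈ C} ⟨u, d⟩ is the support function of C. -/
open scoped RealInnerProductSpace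

/-- For a nonempty closed convex set `C`,
`inf_{‖d‖ ≤ 1} σ_C(d) = −min_{u ∈ C} ‖u‖`, where `σ_C` is the support function
of `C` (valued in `EReal`), and the minimum on the right-hand side is attained. -/
theorem stmt_13 {E : Type*}
    [NormedAddCommGroup E] [InnerProductSpace ℝ E] [FiniteDimensional ℝ E]
    (C : Set E) (hCne : C.Nonempty) (hCcl : IsClosed C) (hCconv : Convex ℝ C) :
    ∃ u₀ ∈ C, (∀ u ∈ C, ‖u₀‖ ≤ ‖u‖) ∧
      (⨅ d ∈ Metric.closedBall (0 : E) 1, ⨆ u ∈ C, ((⟪u, d⟫ : ℝ) : EReal)) =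
        ((-‖u₀‖ : ℝ) : EReal) := by
  obtain ⟨u₀, hu₀, hdist⟩ := hCcl.exists_infDist_eq_dist hCne (0 : E)
  have hmin : ∀ u ∈ C, ‖u₀‖ ≤ ‖u‖ := by
    intro u hu
    have h1 : Metric.infDist 0 C ≤ dist (0 : E) u := Metric.infDist_le_dist_of_mem hu
    rw [hdist] at h1
    simpa [dist_eq_norm, norm_sub_rev] using h1
  refine ⟨u₀, hu₀, hmin, ?_⟩
  -- projection inequality: for u ∈ C, ⟪u₀, u⟫ ≥ ‖u₀‖²
  haveI : Nonempty C := hCne.to_subtype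
  have hproj : ∀ u ∈ C, (‖u₀‖ : ℝ)^2 ≤ ⟪u₀, u⟫ := by
    have hinf : ‖(0 : E) - u₀‖ = ⨅ w : C, ‖(0 : E) - w‖ := by
      apply le_antisymm
      · apply le_ciInf
        intro w
        simpa [norm_sub_rev, norm_neg] using hmin w w.2
      · exact ciInf_le ⟨0, by rintro _ ⟨w, rfl⟩; positivity⟩ (⟨u₀, hu₀⟩ : C)
    have := (norm_eq_iInf_iff_real_inner_le_zero hCconv hu₀).1 hinf
    intro u hu
    have h2 := this u hu
    have h3 : ⟪(0 : E) - u₀, u - u₀⟫ = -⟪u₀, u⟫ + ‖u₀‖^2 := by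
      simp [inner_sub_left, inner_sub_right, real_inner_self_eq_norm_sq,
        real_inner_comm u₀ u]
    rw [h3] at h2
    linarith
  apply le_antisymm
  · -- choose the witness direction
    by_cases h0 : u₀ = 0
    · refine le_trans (biInf_le _ (by simp : (0:E) ∈ Metric.closedBall (0:E) 1)) ?_
      apply iSup₂_le
      intro u hu
      simp [h0]
    · have hn : (0:ℝ) < ‖u₀‖ := norm_pos_iff.2 h0
      set d : E := -(‖u₀‖⁻¹ • u₀) with hd
      have hdball : d ∈ Metric.closedBall (0:E) 1 := by
        simp [hd, norm_smul, abs_of_nonneg (inv_nonneg.2 hn.le), inv_mul_cancel₀ hn.ne']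
      refine le_trans (biInf_le _ hdball) ?_
      apply iSup₂_le
      intro u hu
      have : ⟪u, d⟫ ≤ -‖u₀‖ := by
        have h2 := hproj u hu
        have : ⟪u, d⟫ = -(‖u₀‖⁻¹ * ⟪u₀, u⟫) := by
          simp [hd, inner_smul_right, real_inner_comm u u₀]
        rw [this]
        rw [neg_le_neg_iff]
        have := mul_le_mul_of_nonneg_left h2 (inv_nonneg.2 hn.le)
        calc ‖u₀‖ = ‖u₀‖⁻¹ * ‖u₀‖^2 := by field_simp
          _ ≤ ‖u₀‖⁻¹ * ⟪u₀, u⟫ := this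
      exact_mod_cast EReal.coe_le_coe_iff.2 this
  · apply le_iInf₂
    intro d hd
    have hd1 : ‖d‖ ≤ 1 := by simpa using hd
    refine le_trans ?_ (le_iSup₂ (f := fun u (_ : u ∈ C) => ((⟪u, d⟫ : ℝ) : EReal)) u₀ hu₀)
    have : -‖u₀‖ ≤ ⟪u₀, d⟫ := by
      have h1 : |⟪u₀, d⟫| ≤ ‖u₀‖ * ‖d‖ := abs_real_inner_le_norm u₀ d
      have h2 : ‖u₀‖ * ‖d‖ ≤ ‖u₀‖ := by
        nlinarith [norm_nonneg u₀]
      nlinarith [neg_abs_le ⟪u₀, d⟫]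
    exact_mod_cast EReal.coe_le_coe_iff.2 this
end

section
/- Let h : Z → (-∞, ∞] be a convex function on a finite-dimensional real inner product space whose domain Z₀ := dom h is bounded with diameter D, and suppose h is K-Lipschitz continuous on Z₀. Let u, z ∈ Z₀, δ ≥ 0, and ξ ∈ ∂_δ h(z). Then ‖ξ‖ · dist(u, ∂Z₀) ≤ (dist(u, ∂Z₀) + ‖z − u‖)·K + ⟨ξ, z − u⟩ + δ, where ∂Z₀ denotes the topological boundary of Z₀. -/
open scoped RealInnerProductSpace

/-- Bound on approximate subgradients of a Lipschitz convex function with bounded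
domain, in terms of the distance to the boundary of the domain. -/
theorem stmt_14 {E : Type*}
    [NormedAddCommGroup E] [InnerProductSpace ℝ E] [FiniteDimensional ℝ E]
    (h : E → EReal) (hbot : ∀ x, h x ≠ ⊥)
    (hconv : ∀ x y : E, ∀ t : ℝ, 0 ≤ t → t ≤ 1 →
      h (t • x + (1 - t) • y) ≤ (t : EReal) * h x + ((1 - t : ℝ) : EReal) * h y)
    (Z₀ : Set E) (hZ₀ : Z₀ = {x : E | h x ≠ ⊤}) (hZ₀ne : Z₀.Nonempty)
    (hbdd : Bornology.IsBounded Z₀)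
    (D : ℝ) (hD : ∀ x ∈ Z₀, ∀ y ∈ Z₀, dist x y ≤ D)
    (K : ℝ) (hK : 0 ≤ K)
    (hlip : ∀ x ∈ Z₀, ∀ y ∈ Z₀, |(h x).toReal - (h y).toReal| ≤ K * ‖x - y‖)
    (u z : E) (hu : u ∈ Z₀) (hz : z ∈ Z₀)
    (δ : ℝ) (hδ : 0 ≤ δ) (ξ : E)
    (hξ : ∀ y, h z + ((⟪ξ, y - z⟫ - δ : ℝ) : EReal) ≤ h y) :
    ‖ξ‖ * Metric.infDist u (frontier Z₀) ≤
      (Metric.infDist u (frontier Z₀) + ‖z - u‖) * K + ⟪ξ, z - u⟫ + δ := by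
  set r := Metric.infDist u (frontier Z₀) with hr
  have hr0 : 0 ≤ r := Metric.infDist_nonneg
  have hfin : ∀ x ∈ Z₀, h x = ((h x).toReal : EReal) := by
    intro x hx
    rw [hZ₀] at hx
    exact (EReal.coe_toReal hx (hbot x)).symm
  -- key inequality from the subgradient property and Lipschitz bound
  have keyA : ∀ y ∈ Z₀, ⟪ξ, y - u⟫ ≤ ‖y - u‖ * K + ‖z - u‖ * K + ⟪ξ, z - u⟫ + δ := by
    intro y hy
    have h1 := hξ y
    rw [hfin z hz, hfin y hy, ← EReal.coe_add, EReal.coe_le_coe_iff] at h1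
    have h2 := hlip y hy z hz
    rw [abs_le] at h2
    have h3 : ‖y - z‖ ≤ ‖y - u‖ + ‖z - u‖ := by
      have := norm_sub_le (y - u) (z - u)
      rwa [sub_sub_sub_cancel_right] at this
    have h3' : K * ‖y - z‖ ≤ K * (‖y - u‖ + ‖z - u‖) :=
      mul_le_mul_of_nonneg_left h3 hK
    have h4 : ⟪ξ, y - z⟫ = ⟪ξ, y - u⟫ - ⟪ξ, z - u⟫ := by
      rw [← inner_sub_right, sub_sub_sub_cancel_right]
    nlinarith [h1, h2.2, h3', h4]
  -- the ball of radius r around u is contained in Z₀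
  have hball : Metric.ball u r ⊆ Z₀ := by
    intro x hx
    have hsub : Metric.ball u r ⊆ interior Z₀ ∪ (closure Z₀)ᶜ := by
      intro w hw
      by_contra hcon
      simp only [Set.mem_union, not_or, Set.mem_compl_iff, not_not] at hcon
      have hwf : w ∈ frontier Z₀ := ⟨hcon.2, hcon.1⟩
      have : r ≤ dist w u := by
        rw [dist_comm]
        exact Metric.infDist_le_dist_of_mem hwf
      exact absurd (lt_of_lt_of_le hw this) (lt_irrefl _)
    have hdisj : Disjoint (interior Z₀) (closure Z₀)ᶜ :=
      disjoint_compl_right.mono_left (interior_subset.trans subset_closure)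
    have hrpos : 0 < r := lt_of_le_of_lt dist_nonneg hx
    have hne : ¬ (Metric.ball u r ∩ (closure Z₀)ᶜ).Nonempty := by
      intro hne
      have hsubset := (convex_ball u r).isPreconnected.subset_right_of_subset_union
        isOpen_interior isClosed_closure.isOpen_compl hdisj hsub hne
      exact (hsubset (Metric.mem_ball_self hrpos)) (subset_closure hu)
    rcases hsub hx with hi | hc
    · exact interior_subset hi
    · exact absurd ⟨x, hx, hc⟩ hne
  have base : 0 ≤ ‖z - u‖ * K + ⟪ξ, z - u⟫ + δ := by
    have := keyA u hu
    simp only [sub_self, inner_zero_right, norm_zero, zero_mul, zero_add] at this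
    linarith
  by_cases hξ0 : ξ = 0
  · subst hξ0
    simp only [norm_zero, zero_mul, inner_zero_left]
    nlinarith [norm_nonneg (z - u), mul_nonneg (add_nonneg hr0 (norm_nonneg (z - u))) hK]
  · have hxi : (0:ℝ) < ‖ξ‖ := norm_pos_iff.mpr hξ0
    have stepT : ∀ t : ℝ, 0 < t → t < r →
        ‖ξ‖ * t ≤ t * K + ‖z - u‖ * K + ⟪ξ, z - u⟫ + δ := by
      intro t ht htr
      set y := u + (t / ‖ξ‖) • ξ with hy
      have hy_u : y - u = (t / ‖ξ‖) • ξ := by simp [hy]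
      have hnorm : ‖y - u‖ = t := by
        rw [hy_u, norm_smul, Real.norm_eq_abs, abs_of_pos (div_pos ht hxi),
          div_mul_cancel₀ _ (ne_of_gt hxi)]
      have hyZ : y ∈ Z₀ := hball (by rw [Metric.mem_ball, dist_eq_norm, hnorm]; exact htr)
      have hinner : ⟪ξ, y - u⟫ = ‖ξ‖ * t := by
        rw [hy_u, real_inner_smul_right, real_inner_self_eq_norm_sq]
        field_simp
      have := keyA y hyZ
      rw [hinner, hnorm] at this
      linarith
    by_contra hcon
    push_neg at hcon
    set R := r * K + ‖z - u‖ * K + ⟪ξ, z - u⟫ + δ with hR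
    have hRgoal : (r + ‖z - u‖) * K + ⟪ξ, z - u⟫ + δ = R := by rw [hR]; ring
    rw [hRgoal] at hcon
    have hR0 : 0 ≤ R := by
      have := mul_nonneg hr0 hK
      linarith
    have hrpos : 0 < r := by
      by_contra hrle
      push_neg at hrle
      have : r = 0 := le_antisymm hrle hr0
      rw [this] at hcon
      simp at hcon
      linarith
    set t := (R / ‖ξ‖ + r) / 2 with htdef
    have hRr : R / ‖ξ‖ < r := (div_lt_iff₀' hxi).mpr hcon
    have htpos : 0 < t := by
      have : 0 ≤ R / ‖ξ‖ := div_nonneg hR0 (le_of_lt hxi)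
      rw [htdef]; linarith
    have htr : t < r := by rw [htdef]; linarith
    have hstep := stepT t htpos htr
    have htK : t * K ≤ r * K := mul_le_mul_of_nonneg_right (le_of_lt htr) hK
    have hstep2 : ‖ξ‖ * t ≤ R := by rw [hR]; linarith
    have hmul : ‖ξ‖ * (R / ‖ξ‖) = R := mul_div_cancel₀ _ (ne_of_gt hxi)
    have : ‖ξ‖ * t = (R + ‖ξ‖ * r) / 2 := by
      rw [htdef]
      field_simp
    rw [this] at hstep2
    linarith
end

section
/- Let Ψ(x, y) be a real-valued function on X × Y, where X is a convex subset of a finite-dimensional real inner product space and Y is a nonempty compact convex subset of another. Assume: (i) for each x ∈ X, −Ψ(x, ·) is μ-strongly convex on Y for some μ > 0; (ii) for all x, x' ∈ X and y ∈ Y, Ψ(x, y) − Ψ(x', y) − ⟨∇_x Ψ(x', y), x − x'⟩ ≥ −(m/2)‖x − x'‖²; and (iii) ‖∇_x Ψ(x, y) − ∇_x Ψ(x', y')‖ ≤ L_x‖x − x'‖ + L_y‖y − y'‖ for all x, x' ∈ X, y, y' ∈ Y, with m ≤ L_x. Then the map y(x) := argmax_{y∈Y} Ψ(x, y) is well-defined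 and Q_μ-Lipschitz continuous on X with Q_μ := L_y/μ + √((L_x + m)/μ). -/
open scoped RealInnerProductSpace

private lemma quad_aux (μ Ly c r D s : ℝ) (hμ : 0 < μ) (hLy : 0 ≤ Ly)
    (hr : 0 ≤ r) (hD : 0 ≤ D) (hs : 0 ≤ s) (hs2 : μ * s ^ 2 = c)
    (hq : μ * r ^ 2 ≤ Ly * r * D + c * D ^ 2) : r ≤ (Ly / μ + s) * D := by
  rcases le_or_gt r (s * D) with h | h
  · nlinarith [mul_nonneg (div_nonneg hLy hμ.le) hD]
  · have hrpos : 0 < r := lt_of_le_of_lt (mul_nonneg hs hD) h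
    have h1 : μ * s * D * (s * D) ≤ μ * s * D * r := by
      apply mul_le_mul_of_nonneg_left h.le
      positivity
    have hmr : μ * r ≤ Ly * D + μ * s * D := by
      have h2 : μ * r * r ≤ (Ly * D + μ * s * D) * r := by nlinarith [hq, h1]
      exact le_of_mul_le_mul_right h2 hrpos
    have h3 : r ≤ (Ly * D + μ * s * D) / μ := by
      rw [le_div_iff₀ hμ, mul_comm]; exact hmr
    have h4 : (Ly * D + μ * s * D) / μ = (Ly / μ + s) * D := by
      field_simp
    linarith

/-- Lipschitz continuity of the argmax map `y(x) = argmax_{y ∈ Y} Ψ(x, y)` for a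
weakly convex–strongly concave saddle function with Lipschitz partial gradient
in `x`: the argmax is well-defined (exists and is unique) and the map is
`Q_μ`-Lipschitz with `Q_μ = L_y/μ + √((L_x + m)/μ)`. -/
theorem stmt_19 {E F : Type*}
    [NormedAddCommGroup E] [InnerProductSpace ℝ E] [FiniteDimensional ℝ E]
    [NormedAddCommGroup F] [InnerProductSpace ℝ F] [FiniteDimensional ℝ F]
    (X : Set E) (hX : Convex ℝ X)
    (Y : Set F) (hYne : Y.Nonempty) (hYcomp : IsCompact Y) (hYconv : Convex ℝ Y)
    (Ψ : E → F → ℝ) (Gx : E → F → E)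
    (hcont : ∀ x ∈ X, ContinuousOn (fun y => Ψ x y) Y)
    (μ m Lx Ly : ℝ) (hμ : 0 < μ) (hLx : 0 < Lx) (hLy : 0 < Ly)
    (hm : 0 < m) (hmLx : m ≤ Lx)
    (hsc : ∀ x ∈ X, ∀ y₁ ∈ Y, ∀ y₂ ∈ Y, ∀ t : ℝ, 0 ≤ t → t ≤ 1 →
      t * Ψ x y₁ + (1 - t) * Ψ x y₂ + μ / 2 * t * (1 - t) * ‖y₁ - y₂‖ ^ 2 ≤
        Ψ x (t • y₁ + (1 - t) • y₂))
    (hcurv : ∀ x ∈ X, ∀ x' ∈ X, ∀ y ∈ Y,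
      -(m / 2) * ‖x - x'‖ ^ 2 ≤ Ψ x y - Ψ x' y - ⟪Gx x' y, x - x'⟫)
    (hlip : ∀ x ∈ X, ∀ x' ∈ X, ∀ y ∈ Y, ∀ y' ∈ Y,
      ‖Gx x y - Gx x' y'‖ ≤ Lx * ‖x - x'‖ + Ly * ‖y - y'‖) :
    (∀ x ∈ X, ∃! y, y ∈ Y ∧ ∀ y' ∈ Y, Ψ x y' ≤ Ψ x y) ∧
      ∀ ymap : E → F,
        (∀ x ∈ X, ymap x ∈ Y ∧ ∀ y' ∈ Y, Ψ x y' ≤ Ψ x (ymap x)) →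
        ∀ x ∈ X, ∀ x' ∈ X,
          ‖ymap x - ymap x'‖ ≤
            (Ly / μ + Real.sqrt ((Lx + m) / μ)) * ‖x - x'‖ := by
  -- key quadratic-growth property of the maximizer
  have key : ∀ x ∈ X, ∀ y ∈ Y, (∀ y' ∈ Y, Ψ x y' ≤ Ψ x y) → ∀ z ∈ Y,
      Ψ x z + μ / 2 * ‖z - y‖ ^ 2 ≤ Ψ x y := by
    intro x hx y hy hmax z hz
    rcases eq_or_ne z y with rfl | hne
    · simp
    have hr : 0 < ‖z - y‖ := norm_sub_pos_iff.mpr hne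
    have hr2 : 0 < ‖z - y‖ ^ 2 := by positivity
    refine le_of_forall_pos_le_add ?_
    intro ε hε
    set t : ℝ := min 1 (2 * ε / (μ * ‖z - y‖ ^ 2)) with ht_def
    have ht0 : 0 < t := lt_min one_pos (by positivity)
    have ht1 : t ≤ 1 := min_le_left _ _
    have htr : t ≤ 2 * ε / (μ * ‖z - y‖ ^ 2) := min_le_right _ _
    have hts : μ / 2 * t * ‖z - y‖ ^ 2 ≤ ε := by
      have h1 : μ / 2 * (2 * ε / (μ * ‖z - y‖ ^ 2)) * ‖z - y‖ ^ 2 = ε := by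
        field_simp
      nlinarith [mul_pos hμ hr2]
    have hcomb : t • z + (1 - t) • y ∈ Y :=
      hYconv hz hy ht0.le (by linarith) (by ring)
    have h1 := hsc x hx z hz y hy t ht0.le ht1
    have h2 := hmax _ hcomb
    nlinarith [mul_nonneg ht0.le (sub_nonneg.mpr hts), ht0]
  constructor
  · intro x hx
    obtain ⟨y, hy, hmax⟩ := hYcomp.exists_isMaxOn hYne (hcont x hx)
    refine ⟨y, ⟨hy, fun y' hy' => hmax hy'⟩, ?_⟩
    rintro y₂ ⟨hy₂, hmax₂⟩
    have h1 := key x hx y hy (fun y' h => hmax h) y₂ hy₂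
    have h2 := hmax₂ y hy
    have hn2 : ‖y₂ - y‖ ^ 2 ≤ 0 := by nlinarith
    have : ‖y₂ - y‖ = 0 := by nlinarith [sq_nonneg ‖y₂ - y‖, norm_nonneg (y₂ - y)]
    have := norm_sub_eq_zero_iff.mp this
    exact this
  · intro ymap hmap x hx x' hx'
    obtain ⟨hyY, hymax⟩ := hmap x hx
    obtain ⟨hy'Y, hy'max⟩ := hmap x' hx'
    set y : F := ymap x with hy_def
    set y' : F := ymap x' with hy'_def
    set r : ℝ := ‖y - y'‖ with hr_def
    set D : ℝ := ‖x - x'‖ with hD_def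
    have hrrev : ‖y' - y‖ = r := norm_sub_rev _ _
    have hr0 : 0 ≤ r := norm_nonneg _
    have hD0 : 0 ≤ D := norm_nonneg _
    have A := key x hx y hyY hymax y' hy'Y
    have B := key x' hx' y' hy'Y hy'max y hyY
    rw [hrrev] at A
    -- curvature bounds
    have C := hcurv x' hx' x hx y hyY
    have Dq := hcurv x hx x' hx' y' hy'Y
    have E := hlip x hx x' hx' y hyY y' hy'Y
    have hCS : ⟪Gx x y - Gx x' y', x - x'⟫ ≤ ‖Gx x y - Gx x' y'‖ * ‖x - x'‖ :=
      real_inner_le_norm _ _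
    have hsub : ⟪Gx x y - Gx x' y', x - x'⟫ = ⟪Gx x y, x - x'⟫ - ⟪Gx x' y', x - x'⟫ :=
      inner_sub_left _ _ _
    have hsym : ⟪Gx x y, x' - x⟫ = -⟪Gx x y, x - x'⟫ := by
      rw [show x' - x = -(x - x') by abel, inner_neg_right]
    have hDrev : ‖x' - x‖ = D := norm_sub_rev _ _
    rw [hDrev] at C
    -- main quadratic inequality: μ r² ≤ Ly r D + (Lx + m) D²
    have hq : μ * r ^ 2 ≤ Ly * r * D + (Lx + m) * D ^ 2 := by
      have hG : ‖Gx x y - Gx x' y'‖ * D ≤ (Lx * D + Ly * r) * D := by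
        apply mul_le_mul_of_nonneg_right _ hD0
        rw [hr_def, hD_def]
        exact E
      nlinarith [hCS, hsub, hsym, C, Dq, A, B, hG]
    -- solve the quadratic
    set s : ℝ := Real.sqrt ((Lx + m) / μ) with hs_def
    have hs0 : 0 ≤ s := Real.sqrt_nonneg _
    have hs2 : s ^ 2 = (Lx + m) / μ := Real.sq_sqrt (by positivity)
    have hs2' : μ * s ^ 2 = Lx + m := by
      rw [hs2]; field_simp
    exact quad_aux μ Ly (Lx + m) r D s hμ hLy.le hr0 hD0 hs0 hs2' hq
end
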